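/- Let n, m, r be positive integers, and for (U, V) ∈ ℝ^{n×r} × ℝ^{m×r} define M(U, V) := I_m ⊗ (U U^⊤) + (V V^⊤) ⊗ I_n ∈ ℝ^{nm×nm}, where ⊗ denotes the Kronecker product. Then M is differentiable, its derivative at (U, V) in direction (H, K) ∈ ℝ^{n×r} × ℝ^{m×r} equals I_m ⊗ (U H^⊤ + H U^⊤) + (V K^⊤ + K V^⊤) ⊗ I_n, and this derivative vanishes if and only if there exists μ ∈ ℝ such that U H^⊤ + H U^⊤ = μ I_n and V K^⊤ + K V^⊤ = −μ I_m. -/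

import Mathlib

open Matrix Kronecker

attribute [local instance] Matrix.normedAddCommGroup Matrix.normedSpace

noncomputable def mulCLM (α β γ : Type*) [Fintype α] [Fintype β] [Fintype γ] :
    Matrix α β ℝ →L[ℝ] Matrix β γ ℝ →L[ℝ] Matrix α γ ℝ :=
  LinearMap.toContinuousLinearMap
    { toFun := fun X => LinearMap.toContinuousLinearMap
        { toFun := fun Y => X * Y
          map_add' := fun Y Z => Matrix.mul_add X Y Z
          map_smul' := fun c Y => Matrix.mul_smul X c Y }
      map_add' := fun X Y => by ext Z; simp [Matrix.add_mul]
      map_smul' := fun c X => by ext Z; simp [Matrix.smul_mul] }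

@[simp] lemma mulCLM_apply {α β γ : Type*} [Fintype α] [Fintype β] [Fintype γ]
    (X : Matrix α β ℝ) (Y : Matrix β γ ℝ) : mulCLM α β γ X Y = X * Y := rfl

noncomputable def transCLM (α β : Type*) [Fintype α] [Fintype β] :
    Matrix α β ℝ →L[ℝ] Matrix β α ℝ :=
  LinearMap.toContinuousLinearMap
    { toFun := fun X => Xᵀ
      map_add' := fun X Y => Matrix.transpose_add X Y
      map_smul' := fun c X => Matrix.transpose_smul c X }

@[simp] lemma transCLM_apply {α β : Type*} [Fintype α] [Fintype β]
    (X : Matrix α β ℝ) : transCLM α β X = Xᵀ := rfl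

noncomputable def kronLCLM (n m : ℕ) :
    Matrix (Fin n) (Fin n) ℝ →L[ℝ] Matrix (Fin m × Fin n) (Fin m × Fin n) ℝ :=
  LinearMap.toContinuousLinearMap
    { toFun := fun X => (1 : Matrix (Fin m) (Fin m) ℝ) ⊗ₖ X
      map_add' := fun X Y => Matrix.kronecker_add _ X Y
      map_smul' := fun c X => Matrix.kronecker_smul c _ X }

@[simp] lemma kronLCLM_apply (n m : ℕ) (X : Matrix (Fin n) (Fin n) ℝ) :
    kronLCLM n m X = (1 : Matrix (Fin m) (Fin m) ℝ) ⊗ₖ X := rfl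

noncomputable def kronRCLM (n m : ℕ) :
    Matrix (Fin m) (Fin m) ℝ →L[ℝ] Matrix (Fin m × Fin n) (Fin m × Fin n) ℝ :=
  LinearMap.toContinuousLinearMap
    { toFun := fun Y => Y ⊗ₖ (1 : Matrix (Fin n) (Fin n) ℝ)
      map_add' := fun X Y => Matrix.add_kronecker X Y _
      map_smul' := fun c X => Matrix.smul_kronecker c X _ }

@[simp] lemma kronRCLM_apply (n m : ℕ) (Y : Matrix (Fin m) (Fin m) ℝ) :
    kronRCLM n m Y = Y ⊗ₖ (1 : Matrix (Fin n) (Fin n) ℝ) := rfl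

lemma hasFDerivAt_sq {a b : ℕ} (U : Matrix (Fin a) (Fin b) ℝ) :
    HasFDerivAt (fun X : Matrix (Fin a) (Fin b) ℝ => X * Xᵀ)
      (((mulCLM (Fin a) (Fin b) (Fin a)).isBoundedBilinearMap.deriv (U, Uᵀ)).comp
        ((ContinuousLinearMap.id ℝ _).prod (transCLM (Fin a) (Fin b)))) U := by
  have hb := (mulCLM (Fin a) (Fin b) (Fin a)).isBoundedBilinearMap.hasFDerivAt (U, Uᵀ)
  have hj : HasFDerivAt (fun X : Matrix (Fin a) (Fin b) ℝ => (X, Xᵀ))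
      ((ContinuousLinearMap.id ℝ _).prod (transCLM (Fin a) (Fin b))) U :=
    ((ContinuousLinearMap.id ℝ _).prod (transCLM (Fin a) (Fin b))).hasFDerivAt
  exact hb.comp U hj

noncomputable def Dmap (n m r : ℕ) (U : Matrix (Fin n) (Fin r) ℝ)
    (V : Matrix (Fin m) (Fin r) ℝ) :
    (Matrix (Fin n) (Fin r) ℝ × Matrix (Fin m) (Fin r) ℝ) →L[ℝ]
      Matrix (Fin m × Fin n) (Fin m × Fin n) ℝ :=
  ((kronLCLM n m).comp ((((mulCLM (Fin n) (Fin r) (Fin n)).isBoundedBilinearMap.deriv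
        (U, Uᵀ)).comp
      ((ContinuousLinearMap.id ℝ _).prod (transCLM (Fin n) (Fin r)))).comp
    (ContinuousLinearMap.fst ℝ _ _))) +
  ((kronRCLM n m).comp ((((mulCLM (Fin m) (Fin r) (Fin m)).isBoundedBilinearMap.deriv
        (V, Vᵀ)).comp
      ((ContinuousLinearMap.id ℝ _).prod (transCLM (Fin m) (Fin r)))).comp
    (ContinuousLinearMap.snd ℝ _ _)))

lemma Dmap_apply (n m r : ℕ) (U H : Matrix (Fin n) (Fin r) ℝ)
    (V K : Matrix (Fin m) (Fin r) ℝ) :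
    Dmap n m r U V (H, K) =
      (1 : Matrix (Fin m) (Fin m) ℝ) ⊗ₖ (U * Hᵀ + H * Uᵀ) +
        (V * Kᵀ + K * Vᵀ) ⊗ₖ (1 : Matrix (Fin n) (Fin n) ℝ) := by
  rfl

lemma hasFDerivAt_twoLayerMetric' (n m r : ℕ) (U : Matrix (Fin n) (Fin r) ℝ)
    (V : Matrix (Fin m) (Fin r) ℝ) :
    HasFDerivAt (fun p : Matrix (Fin n) (Fin r) ℝ × Matrix (Fin m) (Fin r) ℝ =>
        (1 : Matrix (Fin m) (Fin m) ℝ) ⊗ₖ (p.1 * p.1ᵀ) +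
          (p.2 * p.2ᵀ) ⊗ₖ (1 : Matrix (Fin n) (Fin n) ℝ))
      (Dmap n m r U V) (U, V) := by
  have h1 : HasFDerivAt
      (fun p : Matrix (Fin n) (Fin r) ℝ × Matrix (Fin m) (Fin r) ℝ => p.1 * p.1ᵀ)
      ((((mulCLM (Fin n) (Fin r) (Fin n)).isBoundedBilinearMap.deriv (U, Uᵀ)).comp
        ((ContinuousLinearMap.id ℝ _).prod (transCLM (Fin n) (Fin r)))).comp
        (ContinuousLinearMap.fst ℝ _ _)) (U, V) :=
    (hasFDerivAt_sq (U, V).1).comp (U, V) (hasFDerivAt_fst)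
  have h2 : HasFDerivAt
      (fun p : Matrix (Fin n) (Fin r) ℝ × Matrix (Fin m) (Fin r) ℝ => p.2 * p.2ᵀ)
      ((((mulCLM (Fin m) (Fin r) (Fin m)).isBoundedBilinearMap.deriv (V, Vᵀ)).comp
        ((ContinuousLinearMap.id ℝ _).prod (transCLM (Fin m) (Fin r)))).comp
        (ContinuousLinearMap.snd ℝ _ _)) (U, V) :=
    (hasFDerivAt_sq (U, V).2).comp (U, V) (hasFDerivAt_snd)
  have h1' := (kronLCLM n m).hasFDerivAt.comp (U, V) h1
  have h2' := (kronRCLM n m).hasFDerivAt.comp (U, V) h2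
  exact h1'.add h2'
lemma kron_sum_eq_zero_iff (hn : 0 < n) (hm : 0 < m)
    (A : Matrix (Fin n) (Fin n) ℝ) (B : Matrix (Fin m) (Fin m) ℝ) :
    (1 : Matrix (Fin m) (Fin m) ℝ) ⊗ₖ A + B ⊗ₖ (1 : Matrix (Fin n) (Fin n) ℝ) = 0 ↔
      ∃ μ : ℝ, A = μ • (1 : Matrix (Fin n) (Fin n) ℝ) ∧
        B = -μ • (1 : Matrix (Fin m) (Fin m) ℝ) := by
  constructor
  · intro h
    have he : ∀ (i j : Fin m) (a b : Fin n),
        (1 : Matrix (Fin m) (Fin m) ℝ) i j * A a b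
          + B i j * (1 : Matrix (Fin n) (Fin n) ℝ) a b = 0 := by
      intro i j a b
      have := congrFun (congrFun h (i, a)) (j, b)
      simpa [Matrix.kroneckerMap_apply] using this
    set a0 : Fin n := ⟨0, hn⟩
    set i0 : Fin m := ⟨0, hm⟩
    refine ⟨A a0 a0, ?_, ?_⟩
    · ext a b
      rcases eq_or_ne a b with rfl | hab
      · have h1 := he i0 i0 a a
        have h2 := he i0 i0 a0 a0
        simp [Matrix.one_apply] at h1 h2 ⊢
        linarith
      · have h1 := he i0 i0 a b
        simp [Matrix.one_apply, hab] at h1 ⊢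
        exact h1
    · ext i j
      rcases eq_or_ne i j with rfl | hij
      · have h1 := he i i a0 a0
        simp [Matrix.one_apply] at h1 ⊢
        linarith
      · have h1 := he i j a0 a0
        simp [Matrix.one_apply, hij] at h1 ⊢
        exact h1
  · rintro ⟨μ, hA, hB⟩
    rw [hA, hB, Matrix.kronecker_smul, Matrix.smul_kronecker]
    simp [← add_smul]


/-- The metric `M(U, V) := I_m ⊗ (U Uᵀ) + (V Vᵀ) ⊗ I_n` of the two-layer linear
factorization `φ(U,V) = U Vᵀ`. -/
noncomputable def twoLayerMetric (n m r : ℕ)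
    (p : Matrix (Fin n) (Fin r) ℝ × Matrix (Fin m) (Fin r) ℝ) :
    Matrix (Fin m × Fin n) (Fin m × Fin n) ℝ :=
  (1 : Matrix (Fin m) (Fin m) ℝ) ⊗ₖ (p.1 * p.1ᵀ) +
    (p.2 * p.2ᵀ) ⊗ₖ (1 : Matrix (Fin n) (Fin n) ℝ)

/-- The map `M(U,V) = I_m ⊗ (U Uᵀ) + (V Vᵀ) ⊗ I_n` is differentiable,
its derivative at `(U,V)` in direction `(H,K)` is
`I_m ⊗ (U Hᵀ + H Uᵀ) + (V Kᵀ + K Vᵀ) ⊗ I_n`, and this derivative vanishes iff there is a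
`μ ∈ ℝ` with `U Hᵀ + H Uᵀ = μ I_n` and `V Kᵀ + K Vᵀ = −μ I_m`. -/
theorem twoLayerMetric_derivative
    (n m r : ℕ) (hn : 0 < n) (hm : 0 < m) (hr : 0 < r) :
    Differentiable ℝ (twoLayerMetric n m r) ∧
    ∀ (U : Matrix (Fin n) (Fin r) ℝ) (V : Matrix (Fin m) (Fin r) ℝ)
      (H : Matrix (Fin n) (Fin r) ℝ) (K : Matrix (Fin m) (Fin r) ℝ),
      fderiv ℝ (twoLayerMetric n m r) (U, V) (H, K) =
        (1 : Matrix (Fin m) (Fin m) ℝ) ⊗ₖ (U * Hᵀ + H * Uᵀ) +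
          (V * Kᵀ + K * Vᵀ) ⊗ₖ (1 : Matrix (Fin n) (Fin n) ℝ) ∧
      (fderiv ℝ (twoLayerMetric n m r) (U, V) (H, K) = 0 ↔
        ∃ μ : ℝ, U * Hᵀ + H * Uᵀ = μ • (1 : Matrix (Fin n) (Fin n) ℝ) ∧
          V * Kᵀ + K * Vᵀ = -μ • (1 : Matrix (Fin m) (Fin m) ℝ)) := by
  have key : ∀ (U : Matrix (Fin n) (Fin r) ℝ) (V : Matrix (Fin m) (Fin r) ℝ),
      HasFDerivAt (twoLayerMetric n m r) (Dmap n m r U V) (U, V) :=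
    fun U V => hasFDerivAt_twoLayerMetric' n m r U V
  refine ⟨fun p => ((key p.1 p.2).differentiableAt : DifferentiableAt ℝ _ p), ?_⟩
  intro U V H K
  have hf : fderiv ℝ (twoLayerMetric n m r) (U, V) = Dmap n m r U V :=
    (key U V).fderiv
  have happ : fderiv ℝ (twoLayerMetric n m r) (U, V) (H, K) =
      (1 : Matrix (Fin m) (Fin m) ℝ) ⊗ₖ (U * Hᵀ + H * Uᵀ) +
        (V * Kᵀ + K * Vᵀ) ⊗ₖ (1 : Matrix (Fin n) (Fin n) ℝ) := by
    rw [hf, Dmap_apply]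
  exact ⟨happ, by rw [happ]; exact kron_sum_eq_zero_iff hn hm _ _⟩
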